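/- Let X be a real Banach space and A ⊆ X a bounded subset. Define ε₁ as the infimum of the ε > 0 for which there exists N₁ ∈ ℕ such that for every x* in the closed unit ball B_{X*} of the dual X*, the set {x ∈ A : |x*(x)| > ε} has at most N₁ elements. Define ε₂ as the infimum of the ε > 0 for which there exists N₂ ∈ ℕ such that every finite subset B ⊆ A with |B| ≥ N₂ satisfies ‖ |B|⁻¹ · Σ_{x∈B} x ‖ < ε. Then ε₁ = ε₂. -/

import Mathlib

open Set Finset

lemma aux_avg {X : Type*} [NormedAddCommGroup X] [NormedSpace ℝ X]
    {ε : ℝ} (g : X →L[ℝ] ℝ) (hg : ‖g‖ ≤ 1) (B : Finset X) (hne : B.Nonempty)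
    (hpos : ∀ x ∈ B, ε < g x) :
    ε < ‖(B.card : ℝ)⁻¹ • ∑ x ∈ B, x‖ := by
  have hm : (0:ℝ) < B.card := by exact_mod_cast Finset.card_pos.mpr hne
  have h1 : ε < g ((B.card : ℝ)⁻¹ • ∑ x ∈ B, x) := by
    rw [map_smul, map_sum, smul_eq_mul]
    have hsum : (B.card : ℝ) * ε < ∑ x ∈ B, g x := by
      have := Finset.sum_lt_sum_of_nonempty hne hpos
      simpa [Finset.sum_const, nsmul_eq_mul] using this
    have := mul_lt_mul_of_pos_left hsum (inv_pos.mpr hm)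
    calc ε = (B.card : ℝ)⁻¹ * ((B.card : ℝ) * ε) := by field_simp
      _ < _ := this
  calc ε < g ((B.card : ℝ)⁻¹ • ∑ x ∈ B, x) := h1
    _ ≤ ‖g ((B.card : ℝ)⁻¹ • ∑ x ∈ B, x)‖ := le_abs_self _
    _ ≤ ‖g‖ * ‖(B.card : ℝ)⁻¹ • ∑ x ∈ B, x‖ := g.le_opNorm _
    _ ≤ 1 * ‖(B.card : ℝ)⁻¹ • ∑ x ∈ B, x‖ :=
        mul_le_mul_of_nonneg_right hg (norm_nonneg _)
    _ = _ := one_mul _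

/-- For a bounded subset `A` of a real Banach space `X`, the infimum `ε₁` of the
`ε > 0` for which some `N₁ ∈ ℕ` bounds the cardinality of `{x ∈ A : |x*(x)| > ε}` for all `x*`
in the closed unit ball of the dual, equals the infimum `ε₂` of the `ε > 0` for which some
`N₂ ∈ ℕ` makes `‖|B|⁻¹ • ∑_{x ∈ B} x‖ < ε` for every finite `B ⊆ A` with `|B| ≥ N₂`. -/
theorem statement0 {X : Type*} [NormedAddCommGroup X] [NormedSpace ℝ X] [CompleteSpace X]
    (A : Set X) (hA : Bornology.IsBounded A) :
    sInf {ε : ℝ | 0 < ε ∧ ∃ N₁ : ℕ, ∀ f : X →L[ℝ] ℝ, ‖f‖ ≤ 1 →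
        {x ∈ A | ε < |f x|}.encard ≤ (N₁ : ℕ∞)} =
      sInf {ε : ℝ | 0 < ε ∧ ∃ N₂ : ℕ, ∀ B : Finset X, ↑B ⊆ A → N₂ ≤ B.card →
        ‖(B.card : ℝ)⁻¹ • ∑ x ∈ B, x‖ < ε} := by
  classical
  obtain ⟨C, hC⟩ := hA.exists_norm_le
  set C' : ℝ := max C 0 with hC'def
  have hC'0 : 0 ≤ C' := le_max_right _ _
  have hCA : ∀ x ∈ A, ‖x‖ ≤ C' := fun x hx => (hC x hx).trans (le_max_left _ _)
  set S₁ : Set ℝ := {ε : ℝ | 0 < ε ∧ ∃ N₁ : ℕ, ∀ f : X →L[ℝ] ℝ, ‖f‖ ≤ 1 →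
        {x ∈ A | ε < |f x|}.encard ≤ (N₁ : ℕ∞)} with hS₁def
  set S₂ : Set ℝ := {ε : ℝ | 0 < ε ∧ ∃ N₂ : ℕ, ∀ B : Finset X, ↑B ⊆ A → N₂ ≤ B.card →
        ‖(B.card : ℝ)⁻¹ • ∑ x ∈ B, x‖ < ε} with hS₂def
  have bdd₁ : BddBelow S₁ := ⟨0, fun ε hε => hε.1.le⟩
  have bdd₂ : BddBelow S₂ := ⟨0, fun ε hε => hε.1.le⟩
  have ne₁ : S₁.Nonempty := by
    refine ⟨C' + 1, by linarith, 0, fun f hf => ?_⟩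
    have : {x ∈ A | C' + 1 < |f x|} = ∅ := by
      ext x
      simp only [Set.mem_setOf_eq, Set.mem_empty_iff_false, iff_false, not_and, not_lt]
      intro hx
      calc |f x| ≤ ‖f‖ * ‖x‖ := f.le_opNorm x
        _ ≤ 1 * C' := mul_le_mul hf (hCA x hx) (norm_nonneg _) zero_le_one
        _ ≤ C' + 1 := by linarith
    simp [this]
  have ne₂ : S₂.Nonempty := by
    refine ⟨C' + 1, by linarith, 0, fun B hBA _ => ?_⟩
    rcases B.eq_empty_or_nonempty with rfl | hne
    · simp; linarith
    · have hm : (0:ℝ) < B.card := by exact_mod_cast Finset.card_pos.mpr hne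
      calc ‖(B.card : ℝ)⁻¹ • ∑ x ∈ B, x‖ = (B.card : ℝ)⁻¹ * ‖∑ x ∈ B, x‖ := by
            rw [norm_smul, norm_inv, Real.norm_natCast]
        _ ≤ (B.card : ℝ)⁻¹ * (B.card * C') := by
            refine mul_le_mul_of_nonneg_left ?_ (by positivity)
            calc ‖∑ x ∈ B, x‖ ≤ ∑ x ∈ B, ‖x‖ := norm_sum_le _ _
              _ ≤ ∑ _x ∈ B, C' := Finset.sum_le_sum fun x hx => hCA x (hBA hx)
              _ = B.card * C' := by rw [Finset.sum_const, nsmul_eq_mul]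
        _ = C' := by field_simp
        _ < C' + 1 := by linarith
  have hsub : S₂ ⊆ S₁ := by
    rintro ε ⟨hε, N₂, hN₂⟩
    refine ⟨hε, 2 * N₂ + 1, fun f hf => ?_⟩
    by_contra hcon
    push_neg at hcon
    have h2 : ((2 * N₂ + 2 : ℕ) : ℕ∞) ≤ {x ∈ A | ε < |f x|}.encard := by
      have := Order.add_one_le_of_lt hcon
      rw [show ((2*N₂+2 : ℕ) : ℕ∞) = ((2*N₂+1 : ℕ) : ℕ∞) + 1 by push_cast; ring]
      exact this
    obtain ⟨t, hts, htcard⟩ := Set.exists_subset_encard_eq h2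
    have htfin : t.Finite := Set.finite_of_encard_eq_coe htcard
    set T : Finset X := htfin.toFinset with hTdef
    have hTcard : T.card = 2 * N₂ + 2 := by
      have : (T.card : ℕ∞) = ((2*N₂+2 : ℕ) : ℕ∞) := by
        rw [← Set.encard_coe_eq_coe_finsetCard, htfin.coe_toFinset, htcard]
      exact_mod_cast this
    have hTprop : ∀ x ∈ T, x ∈ A ∧ ε < |f x| := by
      intro x hx
      exact hts (htfin.mem_toFinset.mp hx)
    set Tp : Finset X := T.filter (fun x => ε < f x) with hTp
    set Tm : Finset X := T.filter (fun x => f x < -ε) with hTm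
    have hsplit : T.card ≤ Tp.card + Tm.card := by
      rw [← Finset.card_union_of_disjoint]
      · apply Finset.card_le_card
        intro x hx
        have habs := (hTprop x hx).2
        rcases lt_abs.mp habs with h | h
        · exact Finset.mem_union_left _ (Finset.mem_filter.mpr ⟨hx, h⟩)
        · have : f x < -ε := by linarith
          exact Finset.mem_union_right _ (Finset.mem_filter.mpr ⟨hx, this⟩)
      · rw [Finset.disjoint_filter]
        intro x _ h1 h2
        linarith
    have hone : N₂ + 1 ≤ Tp.card ∨ N₂ + 1 ≤ Tm.card := by omega
    have key : ∀ (g : X →L[ℝ] ℝ), ‖g‖ ≤ 1 → ∀ (B : Finset X), B ⊆ T →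
        N₂ + 1 ≤ B.card → (∀ x ∈ B, ε < g x) → False := by
      intro g hg B hBT hBcard hgB
      have hBne : B.Nonempty := Finset.card_pos.mp (by omega)
      have hBA : ↑B ⊆ A := fun x hx => (hTprop x (hBT hx)).1
      have h1 := hN₂ B hBA (by omega)
      have h2 := aux_avg g hg B hBne hgB
      linarith
    rcases hone with h | h
    · exact key f hf Tp (Finset.filter_subset _ _) h
        (fun x hx => (Finset.mem_filter.mp hx).2)
    · exact key (-f) (by rw [norm_neg]; exact hf) Tm (Finset.filter_subset _ _) h
        (fun x hx => by
          have := (Finset.mem_filter.mp hx).2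
          simp only [ContinuousLinearMap.neg_apply]
          linarith)
  have le₁ : sInf S₁ ≤ sInf S₂ := csInf_le_csInf bdd₁ ne₂ hsub
  have le₂ : sInf S₂ ≤ sInf S₁ := by
    apply le_csInf ne₁
    rintro ε ⟨hε, N₁, hN₁⟩
    apply le_of_forall_pos_le_add
    intro δ hδ
    have hmem : ε + δ ∈ S₂ := by
      refine ⟨by linarith, ⌈(N₁ : ℝ) * C' / δ⌉₊ + 1, fun B hBA hBcard => ?_⟩
      have hBne : B.Nonempty := Finset.card_pos.mp (by omega)
      have hm : (0:ℝ) < B.card := by exact_mod_cast Finset.card_pos.mpr hBne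
      set v : X := (B.card : ℝ)⁻¹ • ∑ x ∈ B, x with hv
      rcases eq_or_ne v 0 with hv0 | hv0
      · rw [hv0, norm_zero]; linarith
      obtain ⟨g, hg1, hgv⟩ := exists_dual_vector ℝ v (norm_ne_zero_iff.mpr hv0)
      set B₁ : Finset X := B.filter (fun x => ε < |g x|) with hB₁
      set B₂ : Finset X := B.filter (fun x => ¬ ε < |g x|) with hB₂
      have hB₁card : B₁.card ≤ N₁ := by
        have hsubset : ↑B₁ ⊆ {x ∈ A | ε < |g x|} := by
          intro x hx
          obtain ⟨h1', h2'⟩ := Finset.mem_filter.mp hx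
          exact ⟨hBA h1', h2'⟩
        have h3 := (Set.encard_le_encard hsubset).trans (hN₁ g hg1.le)
        rw [Set.encard_coe_eq_coe_finsetCard] at h3
        exact_mod_cast h3
      have hnorm : ‖v‖ = (B.card : ℝ)⁻¹ * ∑ x ∈ B, g x := by
        have hgv' : g v = ‖v‖ := by exact_mod_cast hgv
        rw [← hgv', hv, map_smul, map_sum, smul_eq_mul]
      have hb1 : ∑ x ∈ B₁, |g x| ≤ (N₁ : ℝ) * C' := by
        calc ∑ x ∈ B₁, |g x| ≤ ∑ _x ∈ B₁, C' := by
              refine Finset.sum_le_sum fun x hx => ?_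
              have hxA : x ∈ A := hBA (Finset.filter_subset _ _ hx)
              calc |g x| ≤ ‖g‖ * ‖x‖ := g.le_opNorm x
                _ = ‖x‖ := by rw [hg1, one_mul]
                _ ≤ C' := hCA x hxA
          _ = B₁.card * C' := by rw [Finset.sum_const, nsmul_eq_mul]
          _ ≤ N₁ * C' := mul_le_mul_of_nonneg_right (by exact_mod_cast hB₁card) hC'0
      have hb2 : ∑ x ∈ B₂, |g x| ≤ (B.card : ℝ) * ε := by
        calc ∑ x ∈ B₂, |g x| ≤ ∑ _x ∈ B₂, ε := by
              refine Finset.sum_le_sum fun x hx => ?_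
              exact not_lt.mp (Finset.mem_filter.mp hx).2
          _ = B₂.card * ε := by rw [Finset.sum_const, nsmul_eq_mul]
          _ ≤ B.card * ε := by
              have h4 : B₂.card ≤ B.card := Finset.card_le_card (Finset.filter_subset _ _)
              exact mul_le_mul_of_nonneg_right (by exact_mod_cast h4) hε.le
      have hsum : ∑ x ∈ B, g x ≤ (N₁ : ℝ) * C' + B.card * ε := by
        calc ∑ x ∈ B, g x ≤ ∑ x ∈ B, |g x| := Finset.sum_le_sum fun x _ => le_abs_self _
          _ = ∑ x ∈ B₁, |g x| + ∑ x ∈ B₂, |g x| :=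
            (Finset.sum_filter_add_sum_filter_not B _ _).symm
          _ ≤ (N₁ : ℝ) * C' + B.card * ε := add_le_add hb1 hb2
      have hfrac : (B.card : ℝ)⁻¹ * ((N₁ : ℝ) * C') < δ := by
        have hceil : (N₁ : ℝ) * C' / δ ≤ (⌈(N₁ : ℝ) * C' / δ⌉₊ : ℝ) := Nat.le_ceil _
        have hcard' : ((⌈(N₁ : ℝ) * C' / δ⌉₊ + 1 : ℕ) : ℝ) ≤ (B.card : ℝ) := by
          exact_mod_cast hBcard
        push_cast at hcard'
        have h1 : (N₁ : ℝ) * C' / δ < B.card := by linarith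
        have h2 : (N₁ : ℝ) * C' < B.card * δ := by
          rw [div_lt_iff₀ hδ] at h1
          linarith
        rw [inv_mul_lt_iff₀ hm]
        linarith [mul_comm (B.card : ℝ) δ]
      have hle : ‖v‖ ≤ (B.card : ℝ)⁻¹ * ((N₁ : ℝ) * C') + ε := by
        rw [hnorm]
        have := mul_le_mul_of_nonneg_left hsum (le_of_lt (inv_pos.mpr hm) : (0:ℝ) ≤ _)
        calc (B.card : ℝ)⁻¹ * ∑ x ∈ B, g x
            ≤ (B.card : ℝ)⁻¹ * ((N₁ : ℝ) * C' + B.card * ε) := this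
          _ = (B.card : ℝ)⁻¹ * ((N₁ : ℝ) * C') + ε := by field_simp
      linarith
    exact csInf_le bdd₂ hmem
  exact le_antisymm le₁ le₂
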